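/- arXiv:2505.15284 — 2 statements merged into one kernel-verified Lean document; each statement's English description precedes it below -/
import Mathlib

section
/- Let Z ∈ ℝ^{N×M} be the matrix whose rows are the mapped training features, K = Z Zᵀ its kernel matrix, and let {v_j}_{j∈Q} be a finite orthonormal family in ℝ^N with K v_j = λ_j v_j and λ_j > 0 for each j ∈ Q. Set u_j = λ_j^{−1/2} Zᵀ v_j (so that {u_j}_{j∈Q} is an orthonormal family of feature-space principal directions). Then for any vector w ∈ ℝ^M with kernel vector k_w = Z w ∈ ℝ^N, the squared reconstruction error of w with respect to the subspace spanned by {u_j}_{j∈Q} can be computed purely from kernel quantities: ‖w − Σ_{j∈Q} ⟨u_j, w⟩ u_j‖₂² = ‖w‖₂² − Σ_{j∈Q} (v_jᵀ k_w)² / λ_j. -/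
open Matrix

lemma norm_sq_eq_dot (M : ℕ) (x : Fin M → ℝ) :
    ‖(WithLp.equiv 2 (Fin M → ℝ)).symm x‖ ^ 2 = x ⬝ᵥ x := by
  rw [EuclideanSpace.norm_eq]
  rw [Real.sq_sqrt (by positivity)]
  simp [dotProduct, sq]

lemma dot_sum_right {n ι : Type*} [Fintype n] [Fintype ι] (x : n → ℝ) (f : ι → n → ℝ) :
    x ⬝ᵥ (∑ j, f j) = ∑ j, x ⬝ᵥ f j := by
  simp only [dotProduct, Finset.sum_apply, Finset.mul_sum]
  exact Finset.sum_comm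

lemma dot_sum_left {n ι : Type*} [Fintype n] [Fintype ι] (x : n → ℝ) (f : ι → n → ℝ) :
    (∑ j, f j) ⬝ᵥ x = ∑ j, f j ⬝ᵥ x := by
  rw [dotProduct_comm, dot_sum_right]
  exact Finset.sum_congr rfl fun j _ => dotProduct_comm _ _

/-- Given `K = Z Zᵀ` and a finite orthonormal family `{v_j}` with
`K v_j = λ_j v_j`, `λ_j > 0`, and `u_j = λ_j^{-1/2} Zᵀ v_j`, for any `w` with kernel
vector `k_w = Z w`:
`‖w − Σ_j ⟨u_j, w⟩ u_j‖₂² = ‖w‖₂² − Σ_j (v_jᵀ k_w)² / λ_j`. -/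
theorem stmt_6 (N M : ℕ) (Z : Matrix (Fin N) (Fin M) ℝ)
    (K : Matrix (Fin N) (Fin N) ℝ) (hK : K = Z * Zᵀ)
    (ι : Type*) [Fintype ι] [DecidableEq ι]
    (v : ι → (Fin N → ℝ)) (lam : ι → ℝ)
    (hlam : ∀ j, 0 < lam j)
    (heig : ∀ j, K.mulVec (v j) = lam j • v j)
    (horth : ∀ i j, v i ⬝ᵥ v j = if i = j then (1 : ℝ) else 0)
    (u : ι → (Fin M → ℝ))
    (hu : ∀ j, u j = (Real.sqrt (lam j))⁻¹ • Zᵀ.mulVec (v j))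
    (w : Fin M → ℝ) (kw : Fin N → ℝ) (hkw : kw = Z.mulVec w) :
    ‖(WithLp.equiv 2 (Fin M → ℝ)).symm (w - ∑ j, (u j ⬝ᵥ w) • u j)‖ ^ 2 =
      ‖(WithLp.equiv 2 (Fin M → ℝ)).symm w‖ ^ 2 - ∑ j, (v j ⬝ᵥ kw) ^ 2 / lam j := by
  have hZZ : ∀ i j, Zᵀ.mulVec (v i) ⬝ᵥ Zᵀ.mulVec (v j) = lam j * (v i ⬝ᵥ v j) := by
    intro i j
    have : Zᵀ.mulVec (v i) ⬝ᵥ Zᵀ.mulVec (v j) = v i ⬝ᵥ K.mulVec (v j) := by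
      rw [hK, ← Matrix.mulVec_mulVec, Matrix.dotProduct_mulVec (v i) Z,
        Matrix.mulVec_transpose]
    rw [this, heig, dotProduct_smul, smul_eq_mul]
  have hsqrt : ∀ j, Real.sqrt (lam j) * Real.sqrt (lam j) = lam j := fun j =>
    Real.mul_self_sqrt (hlam j).le
  have huu : ∀ i j, u i ⬝ᵥ u j = if i = j then (1 : ℝ) else 0 := by
    intro i j
    rw [hu, hu, smul_dotProduct, dotProduct_smul, hZZ, horth,
      smul_eq_mul, smul_eq_mul]
    by_cases h : i = j
    · subst h
      simp only [if_pos rfl, mul_one]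
      field_simp
      rw [Real.sq_sqrt (hlam i).le]
      exact div_self (ne_of_gt (hlam i))
    · simp [h]
  have hc : ∀ j, u j ⬝ᵥ w = (Real.sqrt (lam j))⁻¹ * (v j ⬝ᵥ kw) := by
    intro j
    rw [hu, smul_dotProduct, smul_eq_mul, hkw, Matrix.mulVec_transpose,
      ← Matrix.dotProduct_mulVec]
  have hc2 : ∀ j, (u j ⬝ᵥ w) * (u j ⬝ᵥ w) = (v j ⬝ᵥ kw) ^ 2 / lam j := by
    intro j
    rw [hc]
    have h1 : ((Real.sqrt (lam j))⁻¹ * (v j ⬝ᵥ kw)) * ((Real.sqrt (lam j))⁻¹ * (v j ⬝ᵥ kw))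
        = (v j ⬝ᵥ kw) ^ 2 * (Real.sqrt (lam j) * Real.sqrt (lam j))⁻¹ := by
      rw [mul_inv]; ring
    rw [h1, hsqrt, div_eq_mul_inv]
  rw [norm_sq_eq_dot, norm_sq_eq_dot]
  set s := ∑ j, (u j ⬝ᵥ w) • u j with hs
  have hws : w ⬝ᵥ s = ∑ j, (u j ⬝ᵥ w) * (u j ⬝ᵥ w) := by
    rw [hs, dot_sum_right]
    refine Finset.sum_congr rfl fun j _ => ?_
    rw [dotProduct_smul, smul_eq_mul, dotProduct_comm]
  have hsw : s ⬝ᵥ w = ∑ j, (u j ⬝ᵥ w) * (u j ⬝ᵥ w) := by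
    rw [dotProduct_comm, hws]
  have hss : s ⬝ᵥ s = ∑ j, (u j ⬝ᵥ w) * (u j ⬝ᵥ w) := by
    rw [hs, dot_sum_left]
    refine Finset.sum_congr rfl fun j _ => ?_
    rw [smul_dotProduct, dot_sum_right, smul_eq_mul]
    rw [Finset.sum_eq_single j]
    · rw [dotProduct_smul, huu, if_pos rfl, smul_eq_mul, mul_one]
    · intro i _ hij
      rw [dotProduct_smul, huu, if_neg (fun h => hij h.symm), smul_zero]
    · intro h; exact absurd (Finset.mem_univ j) h
  have key : (w - s) ⬝ᵥ (w - s) = w ⬝ᵥ w - ∑ j, (u j ⬝ᵥ w) * (u j ⬝ᵥ w) := by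
    rw [sub_dotProduct, dotProduct_sub, dotProduct_sub,
      hws, hsw, hss]
    ring
  rw [key]
  congr 1
  exact Finset.sum_congr rfl fun j _ => hc2 j
end

section
/- Fix σ > 0 and dimension m. Let ω ∈ ℝ^m have independent coordinates, each distributed according to the Gaussian measure with mean 0 and variance σ², and let u be an independent random variable uniformly distributed on [0, 2π]. Then for all x, y ∈ ℝ^m, E_{ω,u}[2 cos(⟨ω, x⟩ + u) cos(⟨ω, y⟩ + u)] = exp(−σ²‖x − y‖₂²/2). In particular, taking σ² = 2γ, the random Fourier feature product is an unbiased estimator of the Gaussian kernel k_gau(x, y) = exp(−γ‖x − y‖₂²). -/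
open MeasureTheory ProbabilityTheory Real Complex
open scoped ENNReal NNReal

lemma gauss_cf (v : NNReal) (hv : v ≠ 0) (t : ℝ) :
    ∫ ω : ℝ, Complex.exp (↑(t * ω) * Complex.I) ∂gaussianReal 0 v
      = Complex.exp (-(v : ℂ) * t ^ 2 / 2) := by
  have hv' : (0 : ℝ) < v := lt_of_le_of_ne v.coe_nonneg (by exact_mod_cast hv.symm)
  have hvc : ((v : ℝ) : ℂ) ≠ 0 := by exact_mod_cast ne_of_gt hv'
  rw [gaussianReal_of_var_ne_zero 0 hv]
  have hpdf : gaussianPDF 0 v = fun x => ((gaussianPDFReal 0 v x).toNNReal : ℝ≥0∞) := rfl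
  rw [hpdf, integral_withDensity_eq_integral_smul
    ((measurable_gaussianPDFReal 0 v).real_toNNReal)]
  have hconst : ∀ x : ℝ, ((gaussianPDFReal 0 v x).toNNReal : ℝ)
      = (Real.sqrt (2 * π * v))⁻¹ * Real.exp (- x ^ 2 / (2 * v)) := by
    intro x
    rw [Real.coe_toNNReal _ (gaussianPDFReal_nonneg 0 v x)]
    simp [gaussianPDFReal]
  have key : ∀ x : ℝ, (gaussianPDFReal 0 v x).toNNReal • Complex.exp (↑(t * x) * Complex.I)
      = ((Real.sqrt (2 * π * v))⁻¹ : ℂ) *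
          Complex.exp ((-(1 / (2 * (v:ℂ)))) * (x:ℂ) ^ 2 + (t * Complex.I) * x + 0) := by
    intro x
    rw [NNReal.smul_def, Complex.real_smul, hconst x]
    push_cast
    rw [mul_assoc, ← Complex.exp_add]
    congr 2
    field_simp
    ring
  simp_rw [key, MeasureTheory.integral_const_mul]
  rw [integral_cexp_quadratic (by simp [hv']) (t * Complex.I) 0]
  have h1 : ((π : ℂ) / -(-(1 / (2 * (v:ℂ))))) = ((2 * π * v : ℝ) : ℂ) := by
    push_cast
    field_simp
  rw [h1]
  have h2 : ((2 * π * v : ℝ) : ℂ) ^ (1 / 2 : ℂ) = ((Real.sqrt (2 * π * v) : ℝ) : ℂ) := by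
    rw [show ((1:ℂ)/2) = ((1/2 : ℝ) : ℂ) by norm_num,
      ← Complex.ofReal_cpow (by positivity), ← Real.sqrt_eq_rpow]
  rw [h2]
  have h3 : (0 : ℂ) - (↑t * Complex.I) ^ 2 / (4 * (-(1 / (2 * (v:ℂ))))) = -(v:ℂ) * t ^ 2 / 2 := by
    rw [mul_pow, Complex.I_sq]
    field_simp
    ring
  rw [h3, ← mul_assoc, inv_mul_cancel₀
    (by exact_mod_cast (by positivity : Real.sqrt (2 * π * v) ≠ 0) :
      ((Real.sqrt (2 * π * v) : ℝ) : ℂ) ≠ 0), one_mul]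

lemma gauss_cos (m : ℕ) (v : NNReal) (hv : v ≠ 0) (z : Fin m → ℝ) :
    ∫ ω : Fin m → ℝ, Real.cos (∑ i, ω i * z i)
        ∂Measure.pi (fun _ : Fin m => gaussianReal 0 v)
      = Real.exp (-(v : ℝ) * (∑ i, z i ^ 2) / 2) := by
  letI : MeasureSpace ℝ := ⟨gaussianReal 0 v⟩
  haveI : SigmaFinite (volume : Measure ℝ) := inferInstanceAs (SigmaFinite (gaussianReal 0 v))
  haveI : IsFiniteMeasure (volume : Measure ℝ) := inferInstanceAs (IsFiniteMeasure (gaussianReal 0 v))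
  have hpi : Measure.pi (fun _ : Fin m => gaussianReal 0 v) = (volume : Measure (Fin m → ℝ)) :=
    volume_pi.symm
  rw [hpi]
  have hcos : ∀ ω : Fin m → ℝ, Real.cos (∑ i, ω i * z i)
      = (∏ i, Complex.exp (↑(z i * ω i) * Complex.I)).re := by
    intro ω
    rw [← Complex.exp_sum]
    simp_rw [← Finset.sum_mul, ← Complex.ofReal_sum]
    rw [Complex.exp_ofReal_mul_I_re]
    congr 1
    exact Finset.sum_congr rfl fun i _ => mul_comm _ _
  simp_rw [hcos]
  have hint : Integrable (fun ω : Fin m → ℝ => ∏ i, Complex.exp (↑(z i * ω i) * Complex.I)) := by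
    apply MeasureTheory.Integrable.fintype_prod (f := fun i (w : ℝ) => Complex.exp (↑(z i * w) * Complex.I))
    intro i
    apply Integrable.mono' (integrable_const (1 : ℝ))
    · exact (Complex.continuous_exp.comp
        ((Complex.continuous_ofReal.comp (continuous_const.mul continuous_id)).mul
          continuous_const)).aestronglyMeasurable
    · filter_upwards with w
      rw [Complex.norm_exp_ofReal_mul_I]
  have hre := integral_re (𝕜 := ℂ) hint
  simp only [RCLike.re_to_complex] at hre
  rw [hre]
  rw [integral_fintype_prod_volume_eq_prod (ι := Fin m) (fun i (w : ℝ) => Complex.exp (↑(z i * w) * Complex.I))]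
  have : ∀ i, ∫ w : ℝ, Complex.exp (↑(z i * w) * Complex.I) = Complex.exp (-(v:ℂ) * (z i) ^ 2 / 2) := by
    intro i
    exact gauss_cf v hv (z i)
  simp_rw [this, ← Complex.exp_sum]
  have : ∑ i : Fin m, -(v:ℂ) * (z i) ^ 2 / 2 = ((-(v:ℝ) * (∑ i, z i ^ 2) / 2 : ℝ) : ℂ) := by
    push_cast
    rw [Finset.mul_sum, Finset.sum_div]
  rw [this, ← Complex.ofReal_exp, Complex.ofReal_re]

lemma cos_uniform (a b : ℝ) :
    ∫ u : ℝ, 2 * Real.cos (a + u) * Real.cos (b + u)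
        ∂((ENNReal.ofReal (2 * π))⁻¹ • volume.restrict (Set.Icc (0 : ℝ) (2 * π)))
      = Real.cos (a - b) := by
  rw [integral_smul_measure, ENNReal.toReal_inv, ENNReal.toReal_ofReal (by positivity)]
  rw [MeasureTheory.integral_Icc_eq_integral_Ioc,
    ← intervalIntegral.integral_of_le (by positivity : (0:ℝ) ≤ 2 * π)]
  have hpt : ∀ u : ℝ, 2 * Real.cos (a + u) * Real.cos (b + u)
      = Real.cos (a - b) + Real.cos (2 * u + (a + b)) := by
    intro u
    rw [Real.cos_add a u, Real.cos_add b u, Real.cos_sub,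
      Real.cos_add (2 * u) (a + b), Real.cos_two_mul, Real.sin_two_mul, Real.cos_add a b,
      Real.sin_add a b]
    have h := Real.sin_sq_add_cos_sq u
    linear_combination 2 * Real.sin a * Real.sin b * h
  simp_rw [hpt]
  rw [intervalIntegral.integral_add (continuous_const.intervalIntegrable _ _)
    ((by continuity : Continuous fun x : ℝ => Real.cos (2 * x + (a + b))).intervalIntegrable _ _)]
  rw [intervalIntegral.integral_const, intervalIntegral.integral_comp_mul_add Real.cos
    two_ne_zero (a + b)]
  rw [integral_cos]
  have h2 : 2 * (2 * π) + (a + b) = a + b + 2 * π + 2 * π := by ring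
  rw [h2, Real.sin_add_two_pi, Real.sin_add_two_pi]
  simp
  field_simp


/-- With `ω ∈ ℝ^m` having i.i.d. Gaussian coordinates of mean `0` and
variance `σ²`, and `u` independent uniform on `[0, 2π]`,
`E[2 cos(⟨ω,x⟩ + u) cos(⟨ω,y⟩ + u)] = exp(−σ² ‖x−y‖₂² / 2)` for all `x, y ∈ ℝ^m`;
in particular (`σ² = 2γ`) the random Fourier feature product is an unbiased estimator
of the Gaussian kernel `exp(−γ‖x−y‖₂²)`. -/
theorem stmt_13 (m : ℕ) (σ : ℝ) (hσ : 0 < σ) (v : NNReal) (hv : (v : ℝ) = σ ^ 2)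
    (x y : EuclideanSpace ℝ (Fin m)) :
    ∫ p : (Fin m → ℝ) × ℝ,
        2 * Real.cos ((∑ i, p.1 i * x i) + p.2) * Real.cos ((∑ i, p.1 i * y i) + p.2)
      ∂((Measure.pi fun _ : Fin m => ProbabilityTheory.gaussianReal 0 v).prod
          ((ENNReal.ofReal (2 * Real.pi))⁻¹ • volume.restrict (Set.Icc (0 : ℝ) (2 * Real.pi)))) =
      Real.exp (-σ ^ 2 * ‖x - y‖ ^ 2 / 2) := by
  have hv0 : v ≠ 0 := by
    intro h
    rw [h] at hv
    simp at hv
    nlinarith [hv, hσ]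
  set ν : Measure ℝ :=
    (ENNReal.ofReal (2 * Real.pi))⁻¹ • volume.restrict (Set.Icc (0 : ℝ) (2 * Real.pi)) with hν
  haveI : IsFiniteMeasure ν := by
    constructor
    rw [hν, Measure.smul_apply, Measure.restrict_apply MeasurableSet.univ, Set.univ_inter,
      Real.volume_Icc, smul_eq_mul]
    exact ENNReal.mul_lt_top (ENNReal.inv_lt_top.mpr (by simp [Real.pi_pos]))
      ENNReal.ofReal_lt_top
  have hcont : Continuous (fun p : (Fin m → ℝ) × ℝ =>
      2 * Real.cos ((∑ i, p.1 i * x i) + p.2) * Real.cos ((∑ i, p.1 i * y i) + p.2)) := by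
    apply Continuous.mul
    apply Continuous.mul continuous_const
    all_goals
      exact Real.continuous_cos.comp ((continuous_finset_sum _ fun i _ =>
        ((continuous_apply i).comp continuous_fst).mul continuous_const).add continuous_snd)
  have hint : Integrable (fun p : (Fin m → ℝ) × ℝ =>
      2 * Real.cos ((∑ i, p.1 i * x i) + p.2) * Real.cos ((∑ i, p.1 i * y i) + p.2))
      ((Measure.pi fun _ : Fin m => ProbabilityTheory.gaussianReal 0 v).prod ν) := by
    apply Integrable.mono' (integrable_const (2 : ℝ)) hcont.aestronglyMeasurable
    filter_upwards with p
    rw [Real.norm_eq_abs, abs_mul, abs_mul, (by norm_num : |(2:ℝ)| = 2)]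
    nlinarith [Real.abs_cos_le_one ((∑ i, p.1 i * x i) + p.2),
      Real.abs_cos_le_one ((∑ i, p.1 i * y i) + p.2),
      abs_nonneg (Real.cos ((∑ i, p.1 i * x i) + p.2)),
      abs_nonneg (Real.cos ((∑ i, p.1 i * y i) + p.2))]
  rw [MeasureTheory.integral_prod _ hint]
  have hinner : ∀ ω : Fin m → ℝ,
      (∫ u : ℝ, 2 * Real.cos ((∑ i, ω i * x i) + u) * Real.cos ((∑ i, ω i * y i) + u) ∂ν)
        = Real.cos (∑ i, ω i * (x i - y i)) := by
    intro ω
    rw [hν, cos_uniform]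
    congr 1
    rw [← Finset.sum_sub_distrib]
    exact Finset.sum_congr rfl fun i _ => by ring
  simp_rw [hinner]
  rw [gauss_cos m v hv0 (fun i => x i - y i)]
  congr 1
  have hnorm : ‖x - y‖ ^ 2 = ∑ i, (x i - y i) ^ 2 := by
    rw [EuclideanSpace.norm_eq, Real.sq_sqrt (by positivity)]
    exact Finset.sum_congr rfl fun i _ => by
      rw [Real.norm_eq_abs, _root_.sq_abs]
      simp
  rw [hnorm, hv]
end
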